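/- Let a ≥ 1, b ≥ 0 and c ≥ 1 be natural numbers and let y be a formal power series over ℚ in one variable x satisfying y = x·(1 + y^a)^b. Then for every natural number n ≥ c such that a divides n − c, the coefficient of x^n in y^c equals (c/n) · binomial(n·b, (n−c)/a). -/

import Mathlib

open PowerSeries Finset

private lemma keyN (K N m' : ℕ) :
    ∑ i ∈ Finset.range (m' + 1), (i + 1) * K.choose (i + 1) * N.choose (m' - i)
      = K * (K + N - 1).choose m' := by
  cases K with
  | zero => simp
  | succ K' =>
    have hterm : ∀ i ∈ Finset.range (m' + 1),
        (i + 1) * (K' + 1).choose (i + 1) * N.choose (m' - i)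
          = (K' + 1) * (K'.choose i * N.choose (m' - i)) := by
      intro i _
      have h := Nat.add_one_mul_choose_eq K' i
      calc (i + 1) * (K' + 1).choose (i + 1) * N.choose (m' - i)
          = ((K' + 1).choose (i + 1) * (i + 1)) * N.choose (m' - i) := by ring
        _ = ((K' + 1) * K'.choose i) * N.choose (m' - i) := by rw [← h]
        _ = (K' + 1) * (K'.choose i * N.choose (m' - i)) := by ring
    rw [Finset.sum_congr rfl hterm, ← Finset.mul_sum]
    have hv := Nat.add_choose_eq K' N m'
    rw [Finset.Nat.sum_antidiagonal_eq_sum_range_succ (fun x y => K'.choose x * N.choose y)] at hv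
    simp only [Nat.succ_eq_add_one] at hv
    rw [show K' + 1 + N - 1 = K' + N from by omega, hv]

private lemma keyQ (K N m : ℕ) (hm : 1 ≤ m) :
    ∑ j ∈ Finset.range (K + 1), (K.choose j : ℚ) *
        (if 1 ≤ j ∧ j ≤ m then (j : ℚ) / (m : ℚ) * (N.choose (m - j) : ℚ) else 0)
      = (K : ℚ) / (m : ℚ) * ((K + N - 1).choose (m - 1) : ℚ) := by
  obtain ⟨m', rfl⟩ : ∃ m', m = m' + 1 := ⟨m - 1, by omega⟩
  set f : ℕ → ℚ := fun j => (K.choose j : ℚ) *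
      (if 1 ≤ j ∧ j ≤ m' + 1 then (j : ℚ) / ((m' + 1 : ℕ) : ℚ) * (N.choose (m' + 1 - j) : ℚ)
        else 0) with hf
  have hzero1 : ∀ j, K + 1 ≤ j → f j = 0 := by
    intro j hj
    simp [hf, Nat.choose_eq_zero_of_lt (show K < j by omega)]
  have hzero2 : ∀ j, m' + 2 ≤ j → f j = 0 := by
    intro j hj
    simp only [hf]
    rw [if_neg (by omega), mul_zero]
  have hstep : ∑ j ∈ Finset.range (K + 1), f j = ∑ j ∈ Finset.range (m' + 2), f j := by
    have h1 : ∑ j ∈ Finset.range (K + 1), f j = ∑ j ∈ Finset.range (K + m' + 2), f j := by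
      apply Finset.sum_subset
      · exact Finset.range_subset_range.2 (by omega)
      · intro x _ hx
        exact hzero1 x (by simp only [Finset.mem_range] at hx; omega)
    have h2 : ∑ j ∈ Finset.range (m' + 2), f j = ∑ j ∈ Finset.range (K + m' + 2), f j := by
      apply Finset.sum_subset
      · exact Finset.range_subset_range.2 (by omega)
      · intro x _ hx
        exact hzero2 x (by simpa using Nat.le_of_not_lt (by simpa using hx))
    rw [h1, h2]
  rw [hstep, Finset.sum_range_succ']
  have hf0 : f 0 = 0 := by simp [hf]
  rw [hf0, add_zero]
  have hft : ∀ i ∈ Finset.range (m' + 1), f (i + 1)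
      = (((i + 1) * K.choose (i + 1) * N.choose (m' - i) : ℕ) : ℚ) / ((m' + 1 : ℕ) : ℚ) := by
    intro i hi
    simp only [Finset.mem_range] at hi
    simp only [hf]
    rw [if_pos (by omega), show m' + 1 - (i + 1) = m' - i from by omega]
    push_cast
    ring
  rw [Finset.sum_congr rfl hft, ← Finset.sum_div, ← Nat.cast_sum, keyN K N m',
    Nat.add_sub_cancel]
  push_cast
  ring

private lemma coeff_pow_zero_of_lt {a b : ℕ} (y : PowerSeries ℚ)
    (hy : y = PowerSeries.X * (1 + y ^ a) ^ b) {n c : ℕ} (h : n < c) :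
    PowerSeries.coeff n (y ^ c) = 0 := by
  have h1 : y ^ c = PowerSeries.X ^ c * ((1 + y ^ a) ^ b) ^ c := by
    conv_lhs => rw [hy, mul_pow]
  rw [h1, PowerSeries.coeff_X_pow_mul', if_neg (by omega)]

private lemma rec_step {a b c n : ℕ} (hn : c ≤ n) (y : PowerSeries ℚ)
    (hy : y = PowerSeries.X * (1 + y ^ a) ^ b) :
    PowerSeries.coeff n (y ^ c) = ∑ j ∈ Finset.range (b * c + 1),
      ((b * c).choose j : ℚ) * PowerSeries.coeff (n - c) (y ^ (a * j)) := by
  have h1 : y ^ c = PowerSeries.X ^ c * (1 + y ^ a) ^ (b * c) := by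
    conv_lhs => rw [hy, mul_pow, ← pow_mul]
  rw [h1, PowerSeries.coeff_X_pow_mul', if_pos hn]
  rw [add_comm (1 : PowerSeries ℚ) (y ^ a), add_pow]
  simp only [one_pow, mul_one]
  rw [map_sum]
  apply Finset.sum_congr rfl
  intro j _
  rw [← pow_mul]
  rw [show ((b * c).choose j : PowerSeries ℚ) = PowerSeries.C ((b * c).choose j : ℚ) by
    rw [map_natCast]]
  rw [PowerSeries.coeff_mul_C]
  ring

private lemma main_aux (a b : ℕ) (ha : 1 ≤ a) (y : PowerSeries ℚ)
    (hy : y = PowerSeries.X * (1 + y ^ a) ^ b) :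
    ∀ n c : ℕ, 1 ≤ c → PowerSeries.coeff n (y ^ c) =
      if c ≤ n ∧ a ∣ n - c then
        ((c : ℚ) / (n : ℚ)) * (((n * b).choose ((n - c) / a) : ℕ) : ℚ) else 0 := by
  intro n
  induction n using Nat.strong_induction_on with
  | _ n IH =>
    intro c hc
    by_cases hcn : c ≤ n
    · rw [rec_step hcn y hy]
      by_cases hm0 : n = c
      · subst hm0
        have hterm : ∀ j ∈ Finset.range (b * n + 1),
            ((b * n).choose j : ℚ) * PowerSeries.coeff (n - n) (y ^ (a * j))
              = if j = 0 then 1 else 0 := by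
          intro j hj
          rcases Nat.eq_zero_or_pos j with rfl | hj1
          · simp
          · rw [if_neg (by omega)]
            have hz : PowerSeries.coeff (n - n) (y ^ (a * j)) = 0 := by
              apply coeff_pow_zero_of_lt y hy
              have : 1 ≤ a * j := Nat.one_le_iff_ne_zero.2 (Nat.mul_ne_zero (by omega) (by omega))
              omega
            rw [hz, mul_zero]
        rw [Finset.sum_congr rfl hterm,
          Finset.sum_ite_eq' (Finset.range (b * n + 1)) 0 (fun _ => (1 : ℚ)),
          if_pos (by simp), if_pos ⟨le_refl n, by simp⟩]
        have hn0 : (n : ℚ) ≠ 0 := Nat.cast_ne_zero.2 (by omega)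
        simp [Nat.sub_self, Nat.zero_div, div_self hn0]
      · -- n > c
        have hnc1 : 1 ≤ n - c := by omega
        by_cases hd : a ∣ n - c
        · obtain ⟨m, hmeq⟩ := hd
          have hm1 : 1 ≤ m := by
            rcases Nat.eq_zero_or_pos m with rfl | h
            · simp at hmeq; omega
            · exact h
          have hterm : ∀ j ∈ Finset.range (b * c + 1),
              ((b * c).choose j : ℚ) * PowerSeries.coeff (n - c) (y ^ (a * j))
                = ((b * c).choose j : ℚ) *
                  (if 1 ≤ j ∧ j ≤ m then (j : ℚ) / (m : ℚ) * ((a * m * b).choose (m - j) : ℚ)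
                    else 0) := by
            intro j hj
            rcases Nat.eq_zero_or_pos j with rfl | hj1
            · simp only [mul_zero, pow_zero, PowerSeries.coeff_one]
              rw [if_neg (by omega), if_neg (by omega)]
            · have haj : 1 ≤ a * j := Nat.one_le_iff_ne_zero.2 (Nat.mul_ne_zero (by omega)
                (by omega))
              have hlt : n - c < n := by omega
              rw [IH (n - c) hlt (a * j) haj]
              by_cases hjm : j ≤ m
              · rw [if_pos ⟨by rw [hmeq]; exact Nat.mul_le_mul_left a hjm,
                  Nat.dvd_sub ⟨m, hmeq⟩ (dvd_mul_right a j)⟩, if_pos ⟨hj1, hjm⟩]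
                have h1 : n - c - a * j = a * (m - j) := by
                  rw [hmeq, Nat.mul_sub]
                have h2 : (n - c - a * j) / a = m - j := by
                  rw [h1, Nat.mul_div_cancel_left _ (show 0 < a by omega)]
                rw [h2, hmeq]
                have ha0 : (a : ℚ) ≠ 0 := Nat.cast_ne_zero.2 (by omega)
                have hm0' : (m : ℚ) ≠ 0 := Nat.cast_ne_zero.2 (by omega)
                congr 1
                push_cast
                field_simp
              · rw [if_neg, if_neg (by omega)]
                rintro ⟨h1, -⟩
                rw [hmeq] at h1
                have := Nat.le_of_mul_le_mul_left h1 (show 0 < a by omega)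
                omega
          rw [Finset.sum_congr rfl hterm, keyQ (b * c) (a * m * b) m hm1,
            if_pos ⟨hcn, ⟨m, hmeq⟩⟩,
            show (n - c) / a = m from by
              rw [hmeq, Nat.mul_div_cancel_left _ (show 0 < a by omega)]]
          rcases Nat.eq_zero_or_pos b with rfl | hb1
          · simp [Nat.choose_eq_zero_of_lt (show 0 < m from hm1)]
          · have hn' : n = c + a * m := by omega
            have hKN1 : 1 ≤ b * c := Nat.one_le_iff_ne_zero.2 (Nat.mul_ne_zero (by omega)
              (by omega))
            have hnb : n * b = b * c + a * m * b := by rw [hn']; ring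
            have hchoose : (((n * b).choose m : ℕ) : ℚ) * (m : ℚ)
                = (n : ℚ) * (b : ℚ) * (((b * c + a * m * b - 1).choose (m - 1) : ℕ) : ℚ) := by
              have h := Nat.add_one_mul_choose_eq (b * c + a * m * b - 1) (m - 1)
              rw [show b * c + a * m * b - 1 + 1 = n * b from by omega,
                show m - 1 + 1 = m from by omega] at h
              exact_mod_cast h.symm
            have hm0' : (m : ℚ) ≠ 0 := Nat.cast_ne_zero.2 (by omega)
            have hn0 : (n : ℚ) ≠ 0 := Nat.cast_ne_zero.2 (by omega)
            rw [div_mul_eq_mul_div, div_mul_eq_mul_div, div_eq_div_iff hm0' hn0]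
            push_cast
            push_cast at hchoose
            linear_combination (-(c : ℚ)) * hchoose
        · -- a does not divide n - c
          rw [if_neg (by tauto)]
          apply Finset.sum_eq_zero
          intro j hj
          rcases Nat.eq_zero_or_pos j with rfl | hj1
          · simp only [mul_zero, pow_zero, PowerSeries.coeff_one]
            rw [if_neg (by omega), mul_zero]
          · have haj : 1 ≤ a * j := Nat.one_le_iff_ne_zero.2 (Nat.mul_ne_zero (by omega)
              (by omega))
            have hlt : n - c < n := by omega
            rw [IH (n - c) hlt (a * j) haj, if_neg, mul_zero]
            rintro ⟨h1, k, hk⟩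
            exact hd ⟨j + k, by rw [Nat.mul_add]; omega⟩
    · rw [if_neg (by tauto), coeff_pow_zero_of_lt y hy (by omega)]

/-- Lagrange inversion for `y = x·(1+y^a)^b`: for `n ≥ c` with `a ∣ n − c`,
the coefficient of `x^n` in `y^c` equals `(c/n) · binom(n·b, (n−c)/a)`. -/
theorem lagrange_inversion_coeff (a b c : ℕ) (ha : 1 ≤ a) (hc : 1 ≤ c)
    (y : PowerSeries ℚ) (hy : y = PowerSeries.X * (1 + y ^ a) ^ b)
    (n : ℕ) (hn : c ≤ n) (hdvd : a ∣ n - c) :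
    PowerSeries.coeff n (y ^ c) =
      ((c : ℚ) / (n : ℚ)) * (Nat.choose (n * b) ((n - c) / a) : ℚ) := by
  rw [main_aux a b ha y hy n c hc, if_pos ⟨hn, hdvd⟩]
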